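/- Let ℓ : Y × ℝ → ℝ satisfy the Lipschitz condition |ℓ(y, a) − ℓ(y, b)| ≤ α|a − b| for all y ∈ Y and a, b ∈ ℝ, and suppose ℓ(y, 0) = 0 for all y. Let F be a class of real-valued functions on a sample x_1,…,x_m with labels y_1,…,y_m, and let H = {(x, y) ↦ ℓ(y, f(x)) : f ∈ F}. Then the empirical Rademacher complexity satisfies R̂(H) ≤ 2α R̂(F). -/
import Mathlib


/-- A sign vector built from a Boolean choice: the canonical model of a tuple of
independent Rademacher variables. -/
def signVec (m : ℕ) (s : Fin m → Bool) : Fin m → ℝ :=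
  fun i => if s i then 1 else -1

/-- Expectation over `m` i.i.d. Rademacher variables (uniform average over all
`2^m` sign patterns). -/
noncomputable def radE (m : ℕ) (F : (Fin m → ℝ) → ℝ) : ℝ :=
  (∑ s : Fin m → Bool, F (signVec m s)) / 2 ^ m

lemma signVec_sq (m : ℕ) (s : Fin m → Bool) (j : Fin m) :
    signVec m s j * signVec m s j = 1 := by
  unfold signVec; by_cases h : s j <;> simp [h]

lemma signVec_abs (m : ℕ) (s : Fin m → Bool) (j : Fin m) :
    |signVec m s j| = 1 := by
  unfold signVec; by_cases h : s j <;> simp [h]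

lemma signVec_not (m : ℕ) (s : Fin m → Bool) (j : Fin m) :
    signVec m (fun k => !(s k)) j = -(signVec m s j) := by
  unfold signVec; by_cases h : s j <;> simp [h]

/-- Key two-point comparison of suprema for the contraction step. -/
lemma key0 {S : Type*} [Nonempty S] (A a : S → ℝ) (φ0 : ℝ → ℝ) (α : ℝ)
    (hlip : ∀ u v : ℝ, |φ0 u - φ0 v| ≤ α * |u - v|)
    (h1 : BddAbove (Set.range fun t => A t + φ0 (a t)))
    (h2 : BddAbove (Set.range fun t => A t - φ0 (a t)))
    (h3 : BddAbove (Set.range fun t => A t + α * a t))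
    (h4 : BddAbove (Set.range fun t => A t - α * a t)) :
    (⨆ t, (A t + φ0 (a t))) + (⨆ t, (A t - φ0 (a t))) ≤
      (⨆ t, (A t + α * a t)) + (⨆ t, (A t - α * a t)) := by
  set R := (⨆ t, (A t + α * a t)) + (⨆ t, (A t - α * a t)) with hR
  have key : ∀ u v : S, (A u + φ0 (a u)) + (A v - φ0 (a v)) ≤ R := by
    intro u v
    have hd : φ0 (a u) - φ0 (a v) ≤ α * |a u - a v| := (le_abs_self _).trans (hlip _ _)
    rcases le_total (a v) (a u) with h | h
    · have habs : |a u - a v| = a u - a v := abs_of_nonneg (by linarith)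
      rw [habs] at hd
      have hle : (A u + φ0 (a u)) + (A v - φ0 (a v)) ≤ (A u + α * a u) + (A v - α * a v) := by
        linarith
      exact hle.trans (add_le_add (le_ciSup h3 u) (le_ciSup h4 v))
    · have habs : |a u - a v| = a v - a u := by
        rw [abs_sub_comm]; exact abs_of_nonneg (by linarith)
      rw [habs] at hd
      have hle : (A u + φ0 (a u)) + (A v - φ0 (a v)) ≤ (A v + α * a v) + (A u - α * a u) := by
        linarith
      exact hle.trans (add_le_add (le_ciSup h3 v) (le_ciSup h4 u))
  have step1 : ∀ u : S, (A u + φ0 (a u)) + (⨆ t, (A t - φ0 (a t))) ≤ R := by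
    intro u
    have hs : (⨆ t, (A t - φ0 (a t))) ≤ R - (A u + φ0 (a u)) :=
      ciSup_le fun v => by linarith [key u v]
    linarith
  have hfin : (⨆ t, (A t + φ0 (a t))) ≤ R - (⨆ t, (A t - φ0 (a t))) :=
    ciSup_le fun u => by linarith [step1 u]
  linarith

/-- Auxiliary partially-contracted functional. -/
noncomputable def Qaux {m : ℕ} {S : Type*} (φ : Fin m → ℝ → ℝ) (α : ℝ)
    (g : S → Fin m → ℝ) (K : Finset (Fin m)) (s : Fin m → Bool) (t : S) : ℝ :=
  ∑ j ∈ K, signVec m s j * φ j (g t j) + α * ∑ j ∈ Kᶜ, signVec m s j * g t j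

/-- Talagrand-type contraction for the (finite) Rademacher average, without
absolute values. -/
lemma contraction {m : ℕ} {S : Type*} [Nonempty S] (φ : Fin m → ℝ → ℝ) (α : ℝ)
    (hα : 0 ≤ α)
    (hlip : ∀ j (u v : ℝ), |φ j u - φ j v| ≤ α * |u - v|)
    (h0 : ∀ j, φ j 0 = 0)
    (g : S → Fin m → ℝ) (C : Fin m → ℝ) (hC : ∀ t j, |g t j| ≤ C j) :
    ∑ s : Fin m → Bool, ⨆ t, ∑ j, signVec m s j * φ j (g t j) ≤
      ∑ s : Fin m → Bool, ⨆ t, α * ∑ j, signVec m s j * g t j := by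
  classical
  have hφabs : ∀ j (z : ℝ), |φ j z| ≤ α * |z| := fun j z => by
    simpa [h0 j] using hlip j z 0
  set B := α * ∑ j, C j with hB
  have hQabs : ∀ (K : Finset (Fin m)) s t, |Qaux φ α g K s t| ≤ B := by
    intro K s t
    have h1 : |∑ j ∈ K, signVec m s j * φ j (g t j)| ≤ α * ∑ j ∈ K, C j := by
      refine (Finset.abs_sum_le_sum_abs _ _).trans ?_
      rw [Finset.mul_sum]
      refine Finset.sum_le_sum fun j _ => ?_
      rw [abs_mul, signVec_abs, one_mul]
      exact (hφabs j _).trans (mul_le_mul_of_nonneg_left (hC t j) hα)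
    have h2 : |α * ∑ j ∈ Kᶜ, signVec m s j * g t j| ≤ α * ∑ j ∈ Kᶜ, C j := by
      rw [abs_mul, abs_of_nonneg hα]
      refine mul_le_mul_of_nonneg_left ?_ hα
      refine (Finset.abs_sum_le_sum_abs _ _).trans ?_
      refine Finset.sum_le_sum fun j _ => ?_
      rw [abs_mul, signVec_abs, one_mul]
      exact hC t j
    have hsplit : α * ∑ j ∈ K, C j + α * ∑ j ∈ Kᶜ, C j = B := by
      rw [hB, ← mul_add, Finset.sum_add_sum_compl]
    calc |Qaux φ α g K s t| ≤ |∑ j ∈ K, signVec m s j * φ j (g t j)|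
          + |α * ∑ j ∈ Kᶜ, signVec m s j * g t j| := abs_add_le _ _
      _ ≤ B := by rw [← hsplit]; exact add_le_add h1 h2
  have hQbdd : ∀ K s, BddAbove (Set.range (Qaux φ α g K s)) := fun K s =>
    ⟨B, by rintro _ ⟨t, rfl⟩; exact (le_abs_self _).trans (hQabs K s t)⟩
  have main : ∀ K : Finset (Fin m),
      ∑ s : Fin m → Bool, ⨆ t, Qaux φ α g K s t ≤
        ∑ s : Fin m → Bool, ⨆ t, Qaux φ α g ∅ s t := by
    intro K
    induction K using Finset.induction_on with
    | empty => exact le_refl _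
    | @insert j0 K hj0 ih =>
      refine le_trans ?_ ih
      set flip : (Fin m → Bool) → (Fin m → Bool) :=
        fun s => Function.update s j0 (!(s j0)) with hflip
      have hinv : Function.Involutive flip := by
        intro s; funext k
        by_cases hk : k = j0
        · subst hk; simp [hflip, Function.update_self]
        · simp [hflip, Function.update_of_ne hk]
      have pair : ∀ s, (⨆ t, Qaux φ α g (insert j0 K) s t)
            + (⨆ t, Qaux φ α g (insert j0 K) (flip s) t)
          ≤ (⨆ t, Qaux φ α g K s t) + (⨆ t, Qaux φ α g K (flip s) t) := by
        intro s
        set e := signVec m s j0 with he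
        have he2 : e * e = 1 := signVec_sq m s j0
        have habse : |e| = 1 := signVec_abs m s j0
        have hflipj0 : signVec m (flip s) j0 = -e := by
          rw [he]
          simp only [hflip, signVec, Function.update_self]
          cases hs : s j0 <;> simp [hs]
        have hflipj : ∀ j : Fin m, j ≠ j0 → signVec m (flip s) j = signVec m s j := by
          intro j hj; simp only [hflip, signVec, Function.update_of_ne hj]
        have hee : ∀ z : ℝ, e * (e * z) = z := fun z => by rw [← mul_assoc, he2, one_mul]
        have hj0c : j0 ∉ (insert j0 K)ᶜ := by simp
        have hcompl : Kᶜ = insert j0 ((insert j0 K)ᶜ) := by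
          ext j
          by_cases hj : j = j0
          · subst hj; simp [hj0]
          · simp [Finset.mem_insert, Finset.mem_compl, hj]
        set A : S → ℝ := fun t => ∑ j ∈ K, signVec m s j * φ j (g t j)
            + α * ∑ j ∈ (insert j0 K)ᶜ, signVec m s j * g t j with hA
        set a : S → ℝ := fun t => e * g t j0 with ha
        set φ0 : ℝ → ℝ := fun z => e * φ j0 (e * z) with hφ0
        have hφ0lip : ∀ u v : ℝ, |φ0 u - φ0 v| ≤ α * |u - v| := by
          intro u v
          have h1 : φ0 u - φ0 v = e * (φ j0 (e * u) - φ j0 (e * v)) := by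
            rw [hφ0]; ring
          have h2 : |e * u - e * v| = |u - v| := by
            rw [← mul_sub, abs_mul, habse, one_mul]
          rw [h1, abs_mul, habse, one_mul]
          calc |φ j0 (e * u) - φ j0 (e * v)| ≤ α * |e * u - e * v| := hlip j0 _ _
            _ = α * |u - v| := by rw [h2]
        have eq1 : ∀ t, Qaux φ α g (insert j0 K) s t = A t + φ0 (a t) := by
          intro t
          simp only [Qaux, Finset.sum_insert hj0, hA, hφ0, ha, hee]
          ring
        have eq2 : ∀ t, Qaux φ α g (insert j0 K) (flip s) t = A t - φ0 (a t) := by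
          intro t
          have hs1 : ∑ j ∈ K, signVec m (flip s) j * φ j (g t j)
              = ∑ j ∈ K, signVec m s j * φ j (g t j) :=
            Finset.sum_congr rfl fun j hj => by
              rw [hflipj j (fun h => hj0 (h ▸ hj))]
          have hs2 : ∑ j ∈ (insert j0 K)ᶜ, signVec m (flip s) j * g t j
              = ∑ j ∈ (insert j0 K)ᶜ, signVec m s j * g t j :=
            Finset.sum_congr rfl fun j hj => by
              rw [hflipj j (fun h => hj0c (h ▸ hj))]
          simp only [Qaux, Finset.sum_insert hj0, hs1, hs2, hflipj0, hA, hφ0, ha, hee]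
          ring
        have eq3 : ∀ t, Qaux φ α g K s t = A t + α * a t := by
          intro t
          simp only [Qaux, hcompl, Finset.sum_insert hj0c, hA, ha]
          ring
        have eq4 : ∀ t, Qaux φ α g K (flip s) t = A t - α * a t := by
          intro t
          have hs1 : ∑ j ∈ K, signVec m (flip s) j * φ j (g t j)
              = ∑ j ∈ K, signVec m s j * φ j (g t j) :=
            Finset.sum_congr rfl fun j hj => by
              rw [hflipj j (fun h => hj0 (h ▸ hj))]
          have hs2 : ∑ j ∈ (insert j0 K)ᶜ, signVec m (flip s) j * g t j
              = ∑ j ∈ (insert j0 K)ᶜ, signVec m s j * g t j :=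
            Finset.sum_congr rfl fun j hj => by
              rw [hflipj j (fun h => hj0c (h ▸ hj))]
          simp only [Qaux, hcompl, Finset.sum_insert hj0c, hs1, hs2, hflipj0, hA, ha]
          ring
        have hb1 : BddAbove (Set.range fun t => A t + φ0 (a t)) := by
          refine ⟨B, ?_⟩; rintro _ ⟨t, rfl⟩
          show A t + φ0 (a t) ≤ B
          rw [← eq1 t]; exact (le_abs_self _).trans (hQabs _ s t)
        have hb2 : BddAbove (Set.range fun t => A t - φ0 (a t)) := by
          refine ⟨B, ?_⟩; rintro _ ⟨t, rfl⟩
          show A t - φ0 (a t) ≤ B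
          rw [← eq2 t]; exact (le_abs_self _).trans (hQabs _ (flip s) t)
        have hb3 : BddAbove (Set.range fun t => A t + α * a t) := by
          refine ⟨B, ?_⟩; rintro _ ⟨t, rfl⟩
          show A t + α * a t ≤ B
          rw [← eq3 t]; exact (le_abs_self _).trans (hQabs _ s t)
        have hb4 : BddAbove (Set.range fun t => A t - α * a t) := by
          refine ⟨B, ?_⟩; rintro _ ⟨t, rfl⟩
          show A t - α * a t ≤ B
          rw [← eq4 t]; exact (le_abs_self _).trans (hQabs _ (flip s) t)
        calc (⨆ t, Qaux φ α g (insert j0 K) s t)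
              + (⨆ t, Qaux φ α g (insert j0 K) (flip s) t)
            = (⨆ t, (A t + φ0 (a t))) + (⨆ t, (A t - φ0 (a t))) := by
              rw [iSup_congr eq1, iSup_congr eq2]
          _ ≤ (⨆ t, (A t + α * a t)) + (⨆ t, (A t - α * a t)) :=
              key0 A a φ0 α hφ0lip hb1 hb2 hb3 hb4
          _ = (⨆ t, Qaux φ α g K s t) + (⨆ t, Qaux φ α g K (flip s) t) := by
              rw [iSup_congr eq3, iSup_congr eq4]
      have hsumflip : ∀ F : (Fin m → Bool) → ℝ,
          (∑ s : Fin m → Bool, F (flip s)) = ∑ s : Fin m → Bool, F s :=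
        fun F => Fintype.sum_bijective flip hinv.bijective _ _ (fun s => rfl)
      have hpairsum : ∑ s : Fin m → Bool, ((⨆ t, Qaux φ α g (insert j0 K) s t)
            + (⨆ t, Qaux φ α g (insert j0 K) (flip s) t))
          ≤ ∑ s : Fin m → Bool, ((⨆ t, Qaux φ α g K s t)
            + (⨆ t, Qaux φ α g K (flip s) t)) :=
        Finset.sum_le_sum fun s _ => pair s
      rw [Finset.sum_add_distrib, Finset.sum_add_distrib,
        hsumflip (fun s => ⨆ t, Qaux φ α g (insert j0 K) s t),
        hsumflip (fun s => ⨆ t, Qaux φ α g K s t)] at hpairsum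
      linarith
  calc ∑ s : Fin m → Bool, ⨆ t, ∑ j, signVec m s j * φ j (g t j)
      = ∑ s : Fin m → Bool, ⨆ t, Qaux φ α g Finset.univ s t :=
        Finset.sum_congr rfl fun s _ => iSup_congr fun t => by
          simp [Qaux]
    _ ≤ ∑ s : Fin m → Bool, ⨆ t, Qaux φ α g ∅ s t := main Finset.univ
    _ = ∑ s : Fin m → Bool, ⨆ t, α * ∑ j, signVec m s j * g t j :=
        Finset.sum_congr rfl fun s _ => iSup_congr fun t => by
          simp [Qaux]

/-- for an `α`-Lipschitz loss vanishing at `0`, the empirical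
Rademacher complexity of the loss class is at most `2α` times that of the
function class. -/
theorem radE_loss_contraction {X Y : Type*} {m : ℕ} {ι : Type*} [Nonempty ι]
    (ℓ : Y → ℝ → ℝ) (α : ℝ) (hα : 0 ≤ α)
    (hlip : ∀ (y : Y) (a b : ℝ), |ℓ y a - ℓ y b| ≤ α * |a - b|)
    (h0 : ∀ y : Y, ℓ y 0 = 0)
    (f : ι → X → ℝ) (x : Fin m → X) (y : Fin m → Y)
    (hb : ∀ ε : Fin m → ℝ,
      BddAbove (Set.range fun i : ι => |∑ j : Fin m, ε j * f i (x j)|)) :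
    radE m (fun ε => (⨆ i : ι, |∑ j : Fin m, ε j * ℓ (y j) (f i (x j))|) / m) ≤
      2 * α * radE m (fun ε => (⨆ i : ι, |∑ j : Fin m, ε j * f i (x j)|) / m) := by
  classical
  have habs_l : ∀ (yy : Y) (z : ℝ), |ℓ yy z| ≤ α * |z| := fun yy z => by
    simpa [h0 yy] using hlip yy z 0
  have hCex : ∀ j : Fin m, ∃ c : ℝ, ∀ i : ι, |f i (x j)| ≤ c := by
    intro j
    obtain ⟨c, hc⟩ := hb (fun k => if k = j then 1 else 0)
    refine ⟨c, fun i => ?_⟩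
    have h := hc (Set.mem_range_self i)
    simpa [ite_mul, Finset.sum_ite_eq', Finset.mem_univ] using h
  choose C hC using hCex
  set D : Fin m → ℝ := fun j => max (C j) 0 with hD
  set g : Option ι → Fin m → ℝ := fun t j => t.elim 0 (fun i => f i (x j)) with hg
  have hgC : ∀ (t : Option ι) (j : Fin m), |g t j| ≤ D j := by
    intro t j
    cases t with
    | none => simp [hg, hD]
    | some i =>
      simpa [hg, hD] using le_trans (hC j i) (le_max_left (C j) 0)
  set Bp : ℝ := α * ∑ j, D j with hBp
  have hPabs : ∀ (s : Fin m → Bool) (t : Option ι),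
      |∑ j, signVec m s j * ℓ (y j) (g t j)| ≤ Bp := by
    intro s t
    refine (Finset.abs_sum_le_sum_abs _ _).trans ?_
    rw [hBp, Finset.mul_sum]
    refine Finset.sum_le_sum fun j _ => ?_
    rw [abs_mul, signVec_abs, one_mul]
    exact (habs_l _ _).trans (mul_le_mul_of_nonneg_left (hgC t j) hα)
  have hPbdd : ∀ s : Fin m → Bool,
      BddAbove (Set.range fun t : Option ι => ∑ j, signVec m s j * ℓ (y j) (g t j)) :=
    fun s => ⟨Bp, by rintro _ ⟨t, rfl⟩; exact (le_abs_self _).trans (hPabs s t)⟩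
  set P : (Fin m → Bool) → ℝ :=
    fun s => ⨆ t : Option ι, ∑ j, signVec m s j * ℓ (y j) (g t j) with hP
  have hP0 : ∀ s, 0 ≤ P s := by
    intro s
    have h := le_ciSup (hPbdd s) (none : Option ι)
    have hz : (∑ j, signVec m s j * ℓ (y j) (g none j)) = 0 := by
      simp [hg, h0]
    rw [hz] at h
    exact h
  have hstep1 : ∀ s : Fin m → Bool,
      (⨆ i : ι, |∑ j, signVec m s j * ℓ (y j) (f i (x j))|) ≤ P s + P (fun k => !(s k)) := by
    intro s
    refine ciSup_le fun i => ?_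
    rw [abs_le']
    constructor
    · have h := le_ciSup (hPbdd s) (some i)
      have hgi : (∑ j, signVec m s j * ℓ (y j) (g (some i) j))
          = ∑ j, signVec m s j * ℓ (y j) (f i (x j)) := by simp [hg]
      rw [hgi] at h
      have h' : (∑ j, signVec m s j * ℓ (y j) (f i (x j))) ≤ P s := h
      have := hP0 (fun k => !(s k))
      linarith
    · have h := le_ciSup (hPbdd (fun k => !(s k))) (some i)
      have hgi : (∑ j, signVec m (fun k => !(s k)) j * ℓ (y j) (g (some i) j))
          = -(∑ j, signVec m s j * ℓ (y j) (f i (x j))) := by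
        rw [← Finset.sum_neg_distrib]
        refine Finset.sum_congr rfl fun j _ => ?_
        simp [hg, signVec_not]
      rw [hgi] at h
      have h' : -(∑ j, signVec m s j * ℓ (y j) (f i (x j))) ≤ P (fun k => !(s k)) := h
      have := hP0 s
      linarith
  have hnegsum : (∑ s : Fin m → Bool, P (fun k => !(s k))) = ∑ s : Fin m → Bool, P s := by
    have hinv : Function.Involutive (fun s : Fin m → Bool => fun k => !(s k)) := by
      intro s; funext k; simp
    exact Fintype.sum_bijective _ hinv.bijective _ _ (fun s => rfl)
  have hH2P : (∑ s : Fin m → Bool, ⨆ i : ι, |∑ j, signVec m s j * ℓ (y j) (f i (x j))|)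
      ≤ 2 * ∑ s : Fin m → Bool, P s := by
    calc (∑ s : Fin m → Bool, ⨆ i : ι, |∑ j, signVec m s j * ℓ (y j) (f i (x j))|)
        ≤ ∑ s : Fin m → Bool, (P s + P (fun k => !(s k))) :=
          Finset.sum_le_sum fun s _ => hstep1 s
      _ = (∑ s : Fin m → Bool, P s) + ∑ s : Fin m → Bool, P (fun k => !(s k)) :=
          Finset.sum_add_distrib
      _ = 2 * ∑ s : Fin m → Bool, P s := by rw [hnegsum]; ring
  have hcontr : (∑ s : Fin m → Bool, P s)
      ≤ ∑ s : Fin m → Bool, ⨆ t : Option ι, α * ∑ j, signVec m s j * g t j := by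
    exact contraction (fun j => ℓ (y j)) α hα (fun j => hlip (y j)) (fun j => h0 (y j)) g D hgC
  have hstep3 : ∀ s : Fin m → Bool,
      (⨆ t : Option ι, α * ∑ j, signVec m s j * g t j)
        ≤ α * ⨆ i : ι, |∑ j, signVec m s j * f i (x j)| := by
    intro s
    have hFnn : 0 ≤ ⨆ i : ι, |∑ j, signVec m s j * f i (x j)| := by
      obtain ⟨i0⟩ := ‹Nonempty ι›
      exact le_trans (abs_nonneg _) (le_ciSup (hb (signVec m s)) i0)
    refine ciSup_le fun t => ?_
    cases t with
    | none =>
      have hz : (∑ j, signVec m s j * g none j) = 0 := by simp [hg]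
      rw [hz, mul_zero]
      exact mul_nonneg hα hFnn
    | some i =>
      refine mul_le_mul_of_nonneg_left ?_ hα
      have h := le_ciSup (hb (signVec m s)) i
      have hgi : (∑ j, signVec m s j * g (some i) j)
          = ∑ j, signVec m s j * f i (x j) := by simp [hg]
      rw [hgi]
      exact (le_abs_self _).trans h
  have htotal : (∑ s : Fin m → Bool, ⨆ i : ι, |∑ j, signVec m s j * ℓ (y j) (f i (x j))|)
      ≤ 2 * α * ∑ s : Fin m → Bool, ⨆ i : ι, |∑ j, signVec m s j * f i (x j)| := by
    have h3 : (∑ s : Fin m → Bool, ⨆ t : Option ι, α * ∑ j, signVec m s j * g t j)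
        ≤ ∑ s : Fin m → Bool, α * (⨆ i : ι, |∑ j, signVec m s j * f i (x j)|) :=
      Finset.sum_le_sum fun s _ => hstep3 s
    have h4 : (∑ s : Fin m → Bool, α * (⨆ i : ι, |∑ j, signVec m s j * f i (x j)|))
        = α * ∑ s : Fin m → Bool, ⨆ i : ι, |∑ j, signVec m s j * f i (x j)| :=
      (Finset.mul_sum _ _ _).symm
    rw [h4] at h3
    calc (∑ s : Fin m → Bool, ⨆ i : ι, |∑ j, signVec m s j * ℓ (y j) (f i (x j))|)
        ≤ 2 * ∑ s : Fin m → Bool, P s := hH2P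
      _ ≤ 2 * (α * ∑ s : Fin m → Bool, ⨆ i : ι, |∑ j, signVec m s j * f i (x j)|) := by
          linarith [hcontr]
      _ = 2 * α * ∑ s : Fin m → Bool, ⨆ i : ι, |∑ j, signVec m s j * f i (x j)| := by ring
  have hkey : ∀ (A B c : ℝ), A ≤ B → 0 ≤ c → A / c ≤ B / c := by
    intro A B c h hc
    rw [div_eq_mul_inv, div_eq_mul_inv]
    exact mul_le_mul_of_nonneg_right h (inv_nonneg.mpr hc)
  simp only [radE]
  rw [← Finset.sum_div, ← Finset.sum_div]
  have hres := hkey _ _ ((2:ℝ)^m)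
    (hkey _ _ (m:ℝ) htotal (by positivity)) (by positivity)
  calc (∑ s : Fin m → Bool, ⨆ i : ι, |∑ j, signVec m s j * ℓ (y j) (f i (x j))|) / (m:ℝ) / 2 ^ m
      ≤ (2 * α * ∑ s : Fin m → Bool, ⨆ i : ι, |∑ j, signVec m s j * f i (x j)|) / (m:ℝ) / 2 ^ m :=
        hres
    _ = 2 * α * ((∑ s : Fin m → Bool, ⨆ i : ι, |∑ j, signVec m s j * f i (x j)|) / (m:ℝ) / 2 ^ m) := by
        ring
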